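/- Let P_cond,s(m) = E[∏_{k=0}^m 1(s q_k < w) · ∏_{k=1}^m (1 − s q_k / w)] where (q_0,...,q_m) is uniform on the m-simplex. Then for s > w > 0, |E[∏_{k=1}^m (1 − s q_k/w)] − P_cond,s(m)| ≤ (m+1)(1 − w/s)^m · e^{s/w}, and hence the two expectations have the same limit as m → ∞. -/

import Mathlib

open MeasureTheory

/-- The flat Dirichlet(1,…,1) distribution on the standard `m`-simplex in `ℝ^{m+1}`. -/
noncomputable def dirichletFlat (m : ℕ) : Measure (Fin (m + 1) → ℝ) :=
  Measure.map (fun x => Fin.cons (1 - ∑ i, x i) x)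
    ((m.factorial : ENNReal) •
      volume.restrict {x : Fin m → ℝ | (∀ i, 0 ≤ x i) ∧ ∑ i, x i ≤ 1})


def simpl (m : ℕ) (c : ℝ) : Set (Fin m → ℝ) := {x | (∀ i, 0 ≤ x i) ∧ ∑ i, x i ≤ c}

lemma simpl_isClosed (m : ℕ) (c : ℝ) : IsClosed (simpl m c) := by
  have h1 : IsClosed {x : Fin m → ℝ | ∀ i, 0 ≤ x i} := by
    rw [Set.setOf_forall]
    exact isClosed_iInter fun i => isClosed_le continuous_const (continuous_apply i)
  have h2 : IsClosed {x : Fin m → ℝ | ∑ i, x i ≤ c} :=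
    isClosed_le (continuous_finset_sum _ fun i _ => continuous_apply i) continuous_const
  exact h1.inter h2

lemma simpl_vol_le : ∀ (m : ℕ) (c : ℝ), 0 ≤ c →
    volume (simpl m c) ≤ ENNReal.ofReal (c ^ m / m.factorial) := by
  intro m
  induction m with
  | zero =>
    intro c hc
    have : simpl 0 c = Set.univ := by
      ext x
      simp [simpl, hc]
    rw [this]
    simp [volume_pi, Measure.pi_univ]
  | succ m ih =>
    intro c hc
    set S' : Set (ℝ × (Fin m → ℝ)) :=
      {p | 0 ≤ p.1 ∧ (∀ i, 0 ≤ p.2 i) ∧ p.1 + ∑ i, p.2 i ≤ c} with hS'def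
    have hS'closed : IsClosed S' := by
      have h1 : IsClosed {p : ℝ × (Fin m → ℝ) | 0 ≤ p.1} :=
        isClosed_le continuous_const continuous_fst
      have h2 : IsClosed {p : ℝ × (Fin m → ℝ) | ∀ i, 0 ≤ p.2 i} := by
        rw [Set.setOf_forall]
        exact isClosed_iInter fun i =>
          isClosed_le continuous_const ((continuous_apply i).comp continuous_snd)
      have h3 : IsClosed {p : ℝ × (Fin m → ℝ) | p.1 + ∑ i, p.2 i ≤ c} :=
        isClosed_le (continuous_fst.add
          (continuous_finset_sum _ fun i _ => (continuous_apply i).comp continuous_snd))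
          continuous_const
      exact h1.inter (h2.inter h3)
    have hS'meas : MeasurableSet S' := hS'closed.measurableSet
    have hmp := measurePreserving_piFinSuccAbove (fun _ : Fin (m+1) => (volume : Measure ℝ)) 0
    have hpre : simpl (m+1) c = (MeasurableEquiv.piFinSuccAbove (fun _ => ℝ) 0) ⁻¹' S' := by
      ext x
      simp only [simpl, Set.mem_setOf_eq, Set.mem_preimage, MeasurableEquiv.piFinSuccAbove,
        MeasurableEquiv.coe_mk, Equiv.coe_fn_mk, hS'def, Fin.insertNthEquiv, Equiv.coe_fn_symm_mk,
        Fin.removeNth, Fin.zero_succAbove]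
      constructor
      · rintro ⟨h1, h2⟩
        refine ⟨h1 0, fun i => h1 _, ?_⟩
        rw [← Fin.sum_univ_succ (fun i => x i)] at *
        simpa [Fin.zero_succAbove] using h2
      · rintro ⟨h1, h2, h3⟩
        refine ⟨fun i => Fin.cases h1 (fun j => by simpa [Fin.zero_succAbove] using h2 j) i, ?_⟩
        rw [Fin.sum_univ_succ]
        simpa [Fin.zero_succAbove] using h3
    have hvol : volume (simpl (m+1) c)
        = ((volume : Measure ℝ).prod (Measure.pi fun _ : Fin m => (volume : Measure ℝ))) S' := by
      rw [hpre, volume_pi, hmp.measure_preimage hS'meas.nullMeasurableSet]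
    rw [hvol, ← volume_pi, Measure.prod_apply hS'meas]
    have hslice : ∀ a : ℝ, volume (Prod.mk a ⁻¹' S')
        ≤ Set.indicator (Set.Icc 0 c) (fun a => ENNReal.ofReal ((c - a) ^ m / m.factorial)) a := by
      intro a
      by_cases ha : a ∈ Set.Icc 0 c
      · rw [Set.indicator_of_mem ha]
        refine le_trans (measure_mono ?_) (ih (c - a) (by linarith [ha.2]))
        intro y hy
        simp only [Set.mem_preimage, hS'def, Set.mem_setOf_eq] at hy
        exact ⟨hy.2.1, by linarith [hy.2.2]⟩
      · rw [Set.indicator_of_notMem ha]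
        have : Prod.mk a ⁻¹' S' = ∅ := by
          ext y
          simp only [Set.mem_preimage, hS'def, Set.mem_setOf_eq, Set.mem_empty_iff_false,
            iff_false]
          rintro ⟨h1, h2, h3⟩
          have hsum : 0 ≤ ∑ i, y i := Finset.sum_nonneg fun i _ => h2 i
          simp only [Set.mem_Icc, not_and, not_le] at ha
          have := ha h1
          linarith
        rw [this]
        simp
    calc ∫⁻ a, volume (Prod.mk a ⁻¹' S')
        ≤ ∫⁻ a, Set.indicator (Set.Icc 0 c)
            (fun a => ENNReal.ofReal ((c - a) ^ m / m.factorial)) a := lintegral_mono hslice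
      _ = ∫⁻ a in Set.Icc 0 c, ENNReal.ofReal ((c - a) ^ m / m.factorial) :=
          lintegral_indicator measurableSet_Icc _
      _ = ENNReal.ofReal (∫ a in Set.Icc 0 c, (c - a) ^ m / m.factorial) := by
          rw [← ofReal_integral_eq_lintegral_ofReal]
          · exact (((continuous_const.sub continuous_id).pow m).div_const _).integrableOn_Icc
          · filter_upwards [ae_restrict_mem measurableSet_Icc] with a ha
            have : 0 ≤ c - a := by linarith [ha.2]
            positivity
      _ ≤ ENNReal.ofReal (c ^ (m+1) / (m+1).factorial) := by
          apply ENNReal.ofReal_le_ofReal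
          rw [MeasureTheory.integral_Icc_eq_integral_Ioc,
            ← intervalIntegral.integral_of_le hc]
          have h1 : (∫ a in (0:ℝ)..c, (c - a) ^ m / m.factorial)
              = (∫ a in (0:ℝ)..c, (c - a) ^ m) / m.factorial := by
            rw [intervalIntegral.integral_div]
          rw [h1, intervalIntegral.integral_comp_sub_left (fun x => x ^ m) c]
          simp only [sub_self, sub_zero, integral_pow, zero_pow (Nat.succ_ne_zero m)]
          rw [Nat.factorial_succ, div_div]
          apply le_of_eq
          push_cast
          ring


lemma main_bound (s w : ℝ) (hw : 0 < w) (hs : w < s) (m : ℕ) :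
    |(∫ q, ∏ k : Fin m, (1 - s * q k.succ / w) ∂(dirichletFlat m))
      - ∫ q, Set.indicator {q : Fin (m + 1) → ℝ | ∀ k, s * q k < w}
          (fun q => ∏ k : Fin m, (1 - s * q k.succ / w)) q ∂(dirichletFlat m)|
      ≤ ((m : ℝ) + 1) * (1 - w / s) ^ m * Real.exp (s / w) := by
  have hs0 : (0:ℝ) < s := hw.trans hs
  have ht0 : (0:ℝ) ≤ 1 - w / s := by
    have : w / s ≤ 1 := by
      rw [div_le_one hs0]; exact hs.le
    linarith
  set T : (Fin m → ℝ) → Fin (m + 1) → ℝ := fun x => Fin.cons (1 - ∑ i, x i) x with hT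
  set f : (Fin (m + 1) → ℝ) → ℝ := fun q => ∏ k : Fin m, (1 - s * q k.succ / w) with hfdef
  set A : Set (Fin (m + 1) → ℝ) := {q | ∀ k, s * q k < w} with hAdef
  set g : (Fin m → ℝ) → ℝ := fun x => ∏ k : Fin m, (1 - s * x k / w) with hgdef
  have hgT : ∀ x, f (T x) = g x := by
    intro x
    simp [hfdef, hgdef, hT, Fin.cons_succ]
  have hTc : Continuous T := by
    refine continuous_pi fun i => ?_
    refine Fin.cases ?_ (fun j => ?_) i
    · simp only [hT, Fin.cons_zero]
      exact continuous_const.sub (continuous_finset_sum _ fun i _ => continuous_apply i)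
    · simp only [hT, Fin.cons_succ]
      exact continuous_apply j
  have hfc : Continuous f :=
    continuous_finset_prod _ fun k _ =>
      continuous_const.sub (by fun_prop)
  have hgc : Continuous g :=
    continuous_finset_prod _ fun k _ =>
      continuous_const.sub (by fun_prop)
  have hAmeas : MeasurableSet A := by
    rw [hAdef, Set.setOf_forall]
    exact MeasurableSet.iInter fun k =>
      measurableSet_lt (measurable_const.mul (measurable_pi_apply k)) measurable_const
  have hSmeas : MeasurableSet (simpl m 1) := (simpl_isClosed m 1).measurableSet
  have hScompact : IsCompact (simpl m 1) := by
    refine IsCompact.of_isClosed_subset (isCompact_Icc (a := (0 : Fin m → ℝ)) (b := 1))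
      (simpl_isClosed m 1) ?_
    intro x hx
    rw [Set.mem_Icc]
    constructor
    · intro i; exact hx.1 i
    · intro i
      calc x i ≤ ∑ j, x j := Finset.single_le_sum (fun j _ => hx.1 j) (Finset.mem_univ i)
        _ ≤ 1 := hx.2
  set ν : Measure (Fin m → ℝ) := (m.factorial : ENNReal) • volume.restrict (simpl m 1) with hν
  have hmap : dirichletFlat m = ν.map T := rfl
  have hgint : Integrable g ν := by
    have h1 : IntegrableOn g (simpl m 1) volume :=
      hgc.continuousOn.integrableOn_compact hScompact
    exact h1.smul_measure (ENNReal.natCast_ne_top _)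
  set B : Set (Fin m → ℝ) := T ⁻¹' A with hBdef
  have hBmeas : MeasurableSet B := hAmeas.preimage hTc.measurable
  have I1 : (∫ q, f q ∂(dirichletFlat m)) = ∫ x, g x ∂ν := by
    rw [hmap, integral_map hTc.measurable.aemeasurable hfc.aestronglyMeasurable]
    exact integral_congr_ae (Filter.Eventually.of_forall hgT)
  have I2 : (∫ q, A.indicator f q ∂(dirichletFlat m)) = ∫ x, B.indicator g x ∂ν := by
    rw [hmap, integral_map hTc.measurable.aemeasurable
      (hfc.stronglyMeasurable.indicator hAmeas).aestronglyMeasurable]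
    refine integral_congr_ae (Filter.Eventually.of_forall fun x => ?_)
    show A.indicator f (T x) = B.indicator g x
    by_cases h : T x ∈ A
    · rw [Set.indicator_of_mem h, Set.indicator_of_mem (show x ∈ B from h), hgT]
    · rw [Set.indicator_of_notMem h, Set.indicator_of_notMem (show x ∉ B from h)]
  have hsplit : (∫ x, g x ∂ν) - (∫ x, B.indicator g x ∂ν) = ∫ x, Bᶜ.indicator g x ∂ν := by
    have : (∫ x, g x ∂ν) = (∫ x, B.indicator g x ∂ν) + ∫ x, Bᶜ.indicator g x ∂ν := by
      rw [← integral_add (hgint.indicator hBmeas) (hgint.indicator hBmeas.compl)]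
      refine integral_congr_ae (Filter.Eventually.of_forall fun x => ?_)
      exact congrFun (Set.indicator_self_add_compl B g).symm x
    linarith
  have hboundS : ∀ x ∈ simpl m 1, |g x| ≤ Real.exp (s / w) := by
    intro x hx
    have hxn : ∀ k, (0:ℝ) ≤ s * x k / w := fun k => by
      have := hx.1 k; positivity
    calc |g x| = ∏ k : Fin m, |1 - s * x k / w| := Finset.abs_prod _ _
      _ ≤ ∏ k : Fin m, Real.exp (s * x k / w) := by
          refine Finset.prod_le_prod (fun k _ => abs_nonneg _) (fun k _ => ?_)
          have h1 := Real.add_one_le_exp (s * x k / w)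
          have h2 := Real.one_le_exp (hxn k)
          have h0 := hxn k
          rw [abs_le]
          constructor <;> linarith
      _ = Real.exp (∑ k : Fin m, s * x k / w) := (Real.exp_sum _ _).symm
      _ ≤ Real.exp (s / w) := by
          apply Real.exp_le_exp.mpr
          have : ∑ k : Fin m, s * x k / w = (s / w) * ∑ k : Fin m, x k := by
            rw [Finset.mul_sum]
            exact Finset.sum_congr rfl fun k _ => by ring
          rw [this]
          calc (s / w) * ∑ k : Fin m, x k ≤ (s / w) * 1 := by
                apply mul_le_mul_of_nonneg_left hx.2 (by positivity)
            _ = s / w := mul_one _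
  have hae : ∀ᵐ x ∂ν, x ∈ Bᶜ → ‖g x‖ ≤ Real.exp (s / w) := by
    have h0 : ∀ᵐ x ∂(volume.restrict (simpl m 1)), x ∈ Bᶜ → ‖g x‖ ≤ Real.exp (s / w) := by
      filter_upwards [ae_restrict_mem hSmeas] with x hx _
      rw [Real.norm_eq_abs]
      exact hboundS x hx
    rw [hν]
    exact Measure.ae_smul_measure h0 _
  -- the tail bound
  have hνBc : ν Bᶜ ≤ ENNReal.ofReal (((m : ℝ) + 1) * (1 - w / s) ^ m) := by
    have hkey : ∀ k : Fin (m + 1),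
        volume ({x : Fin m → ℝ | w ≤ s * T x k} ∩ simpl m 1)
          ≤ ENNReal.ofReal ((1 - w / s) ^ m / m.factorial) := by
      intro k
      refine Fin.cases ?_ (fun j => ?_) k
      · refine le_trans (measure_mono ?_) (simpl_vol_le m (1 - w / s) ht0)
        rintro x ⟨hxk, hxS⟩
        simp only [Set.mem_setOf_eq, hT, Fin.cons_zero] at hxk
        refine ⟨hxS.1, ?_⟩
        have : w / s ≤ 1 - ∑ i, x i := by
          rw [div_le_iff₀ hs0]
          linarith [mul_comm s (1 - ∑ i, x i) ▸ hxk]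
        linarith
      · set v : Fin m → ℝ := Pi.single j (w / s) with hv
        have hsub : {x : Fin m → ℝ | w ≤ s * T x j.succ} ∩ simpl m 1
            ⊆ (fun y => y + (-v)) ⁻¹' simpl m (1 - w / s) := by
          rintro x ⟨hxk, hxS⟩
          simp only [Set.mem_setOf_eq, hT, Fin.cons_succ] at hxk
          have hxj : w / s ≤ x j := by
            rw [div_le_iff₀ hs0]
            linarith [mul_comm s (x j) ▸ hxk]
          constructor
          · intro i
            by_cases hij : i = j
            · subst hij
              simp only [Pi.add_apply, Pi.neg_apply, hv, Pi.single_eq_same]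
              linarith
            · simp only [Pi.add_apply, Pi.neg_apply, hv, Pi.single_eq_of_ne hij]
              have := hxS.1 i
              linarith
          · have hsv : ∑ i, v i = w / s := Fintype.sum_pi_single' j (w / s)
            have : ∑ i, (x + (-v)) i = (∑ i, x i) - ∑ i, v i := by
              simp only [Pi.add_apply, Pi.neg_apply]
              rw [← Finset.sum_sub_distrib]
              exact Finset.sum_congr rfl fun i _ => by ring
            rw [this, hsv]
            have := hxS.2
            linarith
        calc volume ({x : Fin m → ℝ | w ≤ s * T x j.succ} ∩ simpl m 1)
            ≤ volume ((fun y => y + (-v)) ⁻¹' simpl m (1 - w / s)) := measure_mono hsub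
          _ = volume (simpl m (1 - w / s)) := measure_preimage_add_right _ _ _
          _ ≤ ENNReal.ofReal ((1 - w / s) ^ m / m.factorial) := simpl_vol_le m _ ht0
    have hsub2 : Bᶜ ∩ simpl m 1
        ⊆ ⋃ k : Fin (m + 1), ({x : Fin m → ℝ | w ≤ s * T x k} ∩ simpl m 1) := by
      rintro x ⟨hxB, hxS⟩
      simp only [hBdef, Set.mem_compl_iff, Set.mem_preimage, hAdef, Set.mem_setOf_eq,
        not_forall, not_lt] at hxB
      obtain ⟨k, hk⟩ := hxB
      exact Set.mem_iUnion.mpr ⟨k, hk, hxS⟩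
    have hfact : (0:ℝ) < m.factorial := by positivity
    calc ν Bᶜ = (m.factorial : ENNReal) * volume (Bᶜ ∩ simpl m 1) := by
          rw [hν, Measure.smul_apply, smul_eq_mul, Measure.restrict_apply hBmeas.compl]
      _ ≤ (m.factorial : ENNReal) *
          ∑ k : Fin (m + 1), volume ({x : Fin m → ℝ | w ≤ s * T x k} ∩ simpl m 1) := by
          refine mul_le_mul_right (le_trans (measure_mono hsub2) (measure_iUnion_fintype_le _ _)) _
      _ ≤ (m.factorial : ENNReal) *
          ∑ _k : Fin (m + 1), ENNReal.ofReal ((1 - w / s) ^ m / m.factorial) := by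
          exact mul_le_mul_right (Finset.sum_le_sum fun k _ => hkey k) _
      _ = ENNReal.ofReal (((m : ℝ) + 1) * (1 - w / s) ^ m) := by
          rw [Finset.sum_const, Finset.card_univ, Fintype.card_fin, nsmul_eq_mul]
          rw [← ENNReal.ofReal_natCast (m + 1), ← ENNReal.ofReal_natCast m.factorial,
            ← ENNReal.ofReal_mul (by positivity), ← ENNReal.ofReal_mul (by positivity)]
          congr 1
          push_cast
          field_simp
  -- put things together
  rw [I1, I2, hsplit]
  have hfin : ν Bᶜ < ⊤ := lt_of_le_of_lt hνBc ENNReal.ofReal_lt_top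
  have hnorm := norm_setIntegral_le_of_norm_le_const_ae' hfin hae
  rw [integral_indicator hBmeas.compl]
  rw [← Real.norm_eq_abs]
  refine le_trans hnorm ?_
  have htoReal : (ν Bᶜ).toReal ≤ ((m : ℝ) + 1) * (1 - w / s) ^ m :=
    ENNReal.toReal_le_of_le_ofReal (by positivity) hνBc
  calc Real.exp (s / w) * (ν Bᶜ).toReal
      ≤ Real.exp (s / w) * (((m : ℝ) + 1) * (1 - w / s) ^ m) :=
        mul_le_mul_of_nonneg_left htoReal (Real.exp_nonneg _)
    _ = ((m : ℝ) + 1) * (1 - w / s) ^ m * Real.exp (s / w) := by ring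


/-- For `s > w > 0` and `(q_0,…,q_m) ~ Dirichlet(1,…,1)`,
`|E[∏_{k=1}^m (1 − s q_k/w)] − E[∏_{k=0}^m 1(s q_k < w) ∏_{k=1}^m (1 − s q_k/w)]|
  ≤ (m+1)(1 − w/s)^m e^{s/w}`, and hence the two expectations have the same limit
as `m → ∞` (their difference tends to `0`). -/
theorem stmt16 (s w : ℝ) (hw : 0 < w) (hs : w < s) :
    (∀ m : ℕ,
      |(∫ q, ∏ k : Fin m, (1 - s * q k.succ / w) ∂(dirichletFlat m))
        - ∫ q, Set.indicator {q : Fin (m + 1) → ℝ | ∀ k, s * q k < w}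
            (fun q => ∏ k : Fin m, (1 - s * q k.succ / w)) q ∂(dirichletFlat m)|
        ≤ ((m : ℝ) + 1) * (1 - w / s) ^ m * Real.exp (s / w)) ∧
    Filter.Tendsto
      (fun m : ℕ =>
        (∫ q, ∏ k : Fin m, (1 - s * q k.succ / w) ∂(dirichletFlat m))
          - ∫ q, Set.indicator {q : Fin (m + 1) → ℝ | ∀ k, s * q k < w}
              (fun q => ∏ k : Fin m, (1 - s * q k.succ / w)) q ∂(dirichletFlat m))
      Filter.atTop (nhds 0) := by
  have hs0 : (0:ℝ) < s := hw.trans hs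
  have hr0 : (0:ℝ) ≤ 1 - w / s := by
    have : w / s ≤ 1 := by rw [div_le_one hs0]; exact hs.le
    linarith
  have hr1 : 1 - w / s < 1 := by
    have : 0 < w / s := by positivity
    linarith
  refine ⟨main_bound s w hw hs, ?_⟩
  have hb : Filter.Tendsto
      (fun m : ℕ => ((m : ℝ) + 1) * (1 - w / s) ^ m * Real.exp (s / w))
      Filter.atTop (nhds 0) := by
    have h1 := tendsto_pow_const_mul_const_pow_of_lt_one 1 hr0 hr1
    have h2 := tendsto_pow_atTop_nhds_zero_of_lt_one hr0 hr1
    have h3 := (h1.add h2).mul_const (Real.exp (s / w))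
    rw [show ((0:ℝ) + 0) * Real.exp (s / w) = 0 by ring] at h3
    exact Filter.Tendsto.congr (fun n => by ring) h3
  exact squeeze_zero_norm
    (fun m => by rw [Real.norm_eq_abs]; exact main_bound s w hw hs m) hb
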